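/- For every C > 0 and δ > 0, the set K_C = {g ∈ L₂↑ : ‖g‖_{L^{2+δ}} ≤ C} is compact in L² (0,1). -/

import Mathlib

open MeasureTheory Set Filter Topology ENNReal

noncomputable section

set_option synthInstance.maxHeartbeats 1000000
set_option maxHeartbeats 1000000

/-- Lebesgue measure restricted to `(0,1)`. -/
def mu01 : Measure ℝ := volume.restrict (Set.Ioo (0:ℝ) 1)

instance : IsFiniteMeasure mu01 := by unfold mu01; infer_instance

theorem mono_ext {S : Set ℝ} (hS : S ⊆ Set.Ioo (0:ℝ) 1)
    (hSd : ∀ x ∈ Set.Ioo (0:ℝ) 1, (S ∩ Set.Ioo 0 x).Nonempty ∧ (S ∩ Set.Ioo x 1).Nonempty)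
    {h : ℝ → ℝ} (hm : MonotoneOn h S) :
    ∃ f : ℝ → ℝ, MonotoneOn f (Set.Ioo (0:ℝ) 1) ∧ ∀ x ∈ S, f x = h x := by
  refine ⟨fun x => sInf (h '' (S ∩ Set.Ici x)), ?_, ?_⟩
  · intro x hx y hy hxy
    have hne : (h '' (S ∩ Set.Ici y)).Nonempty := by
      obtain ⟨z, hzS, hzI⟩ := (hSd y hy).2
      exact ⟨h z, ⟨z, ⟨hzS, le_of_lt hzI.1⟩, rfl⟩⟩
    have hbdd : BddBelow (h '' (S ∩ Set.Ici x)) := by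
      obtain ⟨w, hwS, hwI⟩ := (hSd x hx).1
      refine ⟨h w, ?_⟩
      rintro - ⟨z, ⟨hzS, hzI⟩, rfl⟩
      exact hm hwS hzS (le_trans (le_of_lt hwI.2) hzI)
    exact csInf_le_csInf hbdd hne (Set.image_mono (Set.inter_subset_inter_right _ (Set.Ici_subset_Ici.2 hxy)))
  · intro x hxS
    have hx := hS hxS
    have hbdd : BddBelow (h '' (S ∩ Set.Ici x)) := by
      obtain ⟨w, hwS, hwI⟩ := (hSd x hx).1
      refine ⟨h w, ?_⟩
      rintro - ⟨z, ⟨hzS, hzI⟩, rfl⟩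
      exact hm hwS hzS (le_trans (le_of_lt hwI.2) hzI)
    refine le_antisymm (csInf_le hbdd ⟨x, ⟨hxS, le_refl x⟩, rfl⟩) ?_
    refine le_csInf ⟨h x, ⟨x, ⟨hxS, le_refl x⟩, rfl⟩⟩ ?_
    rintro - ⟨z, ⟨hzS, hzI⟩, rfl⟩
    exact hm hxS hzS hzI

theorem K_closed (C δ : ℝ) (hC : 0 < C) (hδ : 0 < δ) :
    IsClosed {g : Lp ℝ 2 mu01 |
      (∃ f : ℝ → ℝ, MonotoneOn f (Set.Ioo (0:ℝ) 1) ∧ (g : ℝ → ℝ) =ᵐ[mu01] f) ∧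
      eLpNorm (g : ℝ → ℝ) (ENNReal.ofReal (2 + δ)) mu01 ≤ ENNReal.ofReal C} := by
  apply IsSeqClosed.isClosed
  intro gs g hgs hlim
  have htim : TendstoInMeasure mu01 (fun n => ⇑(gs n)) atTop ⇑g :=
    tendstoInMeasure_of_tendsto_Lp hlim
  obtain ⟨ns, hns_mono, h_ae⟩ := htim.exists_seq_tendsto_ae
  -- choose monotone representatives
  choose F hFmono hFae using fun n => (hgs n).1
  constructor
  · -- monotone part
    have h_eq : ∀ᵐ x ∂mu01, ∀ i : ℕ, (gs (ns i) : ℝ → ℝ) x = F (ns i) x :=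
      MeasureTheory.ae_all_iff.mpr fun i => hFae (ns i)
    have h_mem : ∀ᵐ x ∂mu01, x ∈ Set.Ioo (0:ℝ) 1 := by
      rw [mu01]; exact ae_restrict_mem measurableSet_Ioo
    have h_all := (h_ae.and h_eq).and h_mem
    set S := {x : ℝ | (Tendsto (fun i => (gs (ns i) : ℝ → ℝ) x) atTop (𝓝 ((g : ℝ → ℝ) x)) ∧
        ∀ i : ℕ, (gs (ns i) : ℝ → ℝ) x = F (ns i) x) ∧ x ∈ Set.Ioo (0:ℝ) 1} with hSdef
    have hSae : ∀ᵐ x ∂mu01, x ∈ S := by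
      filter_upwards [h_all] with x hx using hx
    have hSsub : S ⊆ Set.Ioo (0:ℝ) 1 := fun x hx => hx.2
    have hkey : ∀ T : Set ℝ, mu01 T ≠ 0 → (S ∩ T).Nonempty := by
      intro T hT
      rcases Set.eq_empty_or_nonempty (S ∩ T) with he | hne
      · exfalso
        apply hT
        have hsub : T ⊆ {x | x ∉ S} := by
          intro x hxT hxS
          exact Set.eq_empty_iff_forall_notMem.mp he x ⟨hxS, hxT⟩
        exact le_antisymm ((measure_mono hsub).trans_eq hSae) (zero_le)
      · exact hne
    have hmono : MonotoneOn (⇑g) S := by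
      intro x hx y hy hxy
      have hx' := hx; have hy' := hy
      refine le_of_tendsto_of_tendsto (hx.1.1.congr fun i => (hx.1.2 i)) (hy.1.1.congr fun i => (hy.1.2 i)) ?_
      filter_upwards with i
      exact hFmono (ns i) hx.2 hy.2 hxy
    have hSd : ∀ x ∈ Set.Ioo (0:ℝ) 1, (S ∩ Set.Ioo 0 x).Nonempty ∧ (S ∩ Set.Ioo x 1).Nonempty := by
      intro x hx
      constructor
      · apply hkey
        have : mu01 (Set.Ioo 0 x) = ENNReal.ofReal x := by
          rw [mu01, Measure.restrict_apply measurableSet_Ioo,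
            Set.inter_eq_left.mpr (Set.Ioo_subset_Ioo le_rfl hx.2.le), Real.volume_Ioo, sub_zero]
        rw [this]
        simp [hx.1, ENNReal.ofReal_eq_zero, not_le]
      · apply hkey
        have : mu01 (Set.Ioo x 1) = ENNReal.ofReal (1 - x) := by
          rw [mu01, Measure.restrict_apply measurableSet_Ioo,
            Set.inter_eq_left.mpr (Set.Ioo_subset_Ioo hx.1.le le_rfl), Real.volume_Ioo]
        rw [this]
        simp [ENNReal.ofReal_eq_zero, not_le, hx.2]
    obtain ⟨f, hf_mono, hf_eq⟩ := mono_ext hSsub hSd hmono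
    refine ⟨f, hf_mono, ?_⟩
    filter_upwards [hSae] with x hx
    exact (hf_eq x hx).symm
  · -- norm part
    have hle : eLpNorm (⇑g) (ENNReal.ofReal (2 + δ)) mu01 ≤
        atTop.liminf fun i => eLpNorm (⇑(gs (ns i))) (ENNReal.ofReal (2 + δ)) mu01 :=
      MeasureTheory.Lp.eLpNorm_lim_le_liminf_eLpNorm (fun i => Lp.aestronglyMeasurable _) _ h_ae
    refine hle.trans (le_trans (Filter.liminf_le_liminf (Filter.Eventually.of_forall fun i => (hgs (ns i)).2)) ?_)
    simp

theorem trunc_small (C δ : ℝ) (hC : 0 < C) (hδ : 0 < δ) (ε : ℝ) (hε : 0 < ε) :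
    ∃ M : ℝ, 1 ≤ M ∧ ∀ h : ℝ → ℝ, StronglyMeasurable h →
      eLpNorm h (ENNReal.ofReal (2 + δ)) mu01 ≤ ENNReal.ofReal C →
      eLpNorm (fun x => h x - max (-M) (min M (h x))) 2 mu01 ≤ ENNReal.ofReal ε := by
  set C' := ENNReal.ofReal C with hC'
  have hC'0 : C' ≠ 0 := by simp [hC', hC]
  have hC'top : C' ≠ ⊤ := ENNReal.ofReal_ne_top
  set θ : ℝ := 1/2 - 1/(2+δ) with hθ
  have hθpos : 0 < θ := by
    rw [hθ]
    have h1 : 1/(2+δ) < 1/2 := by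
      apply one_div_lt_one_div_of_lt <;> linarith
    linarith
  set b : ℝ≥0∞ := ENNReal.ofReal ε / C' with hb
  have hb0 : b ≠ 0 := by
    intro hcon
    rcases ENNReal.div_eq_zero_iff.mp hcon with hh | hh
    · rw [ENNReal.ofReal_eq_zero] at hh; linarith
    · exact hC'top hh
  have hbtop : b ≠ ⊤ := by
    intro hcon
    rcases ENNReal.div_eq_top.mp hcon with ⟨-, hh⟩ | ⟨hh, -⟩
    · exact hC'0 hh
    · exact ENNReal.ofReal_ne_top hh
  set x₀ : ℝ≥0∞ := b ^ (1/θ) with hx₀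
  have hx₀0 : x₀ ≠ 0 := by
    simp [hx₀, ENNReal.rpow_eq_zero_iff, hb0, hbtop]
  have hx₀top : x₀ ≠ ⊤ := (ENNReal.rpow_lt_top_of_nonneg (by positivity) hbtop).ne
  have hCpow0 : C' ^ (2+δ) ≠ 0 := by
    simp [ENNReal.rpow_eq_zero_iff, hC'0, hC'top]
  have hCpowtop : C' ^ (2+δ) ≠ ⊤ := (ENNReal.rpow_lt_top_of_nonneg (by linarith) hC'top).ne
  set y₀ : ℝ≥0∞ := (x₀ / C' ^ (2+δ)) ^ (1/(2+δ)) with hy₀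
  have hdiv0 : x₀ / C' ^ (2+δ) ≠ 0 := by
    simp only [ne_eq, ENNReal.div_eq_zero_iff]
    push_neg
    exact ⟨hx₀0, hCpowtop⟩
  have hy₀0 : y₀ ≠ 0 := by
    rw [hy₀]
    intro hcon
    have hpos : (0:ℝ) < 1/(2+δ) := by positivity
    rcases ENNReal.rpow_eq_zero_iff.mp hcon with ⟨h1,-⟩ | ⟨-,h2⟩
    · exact hdiv0 h1
    · linarith
  obtain ⟨n, hn⟩ := exists_nat_ge (y₀⁻¹).toReal
  refine ⟨max 1 n, le_max_left _ _, ?_⟩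
  set M : ℝ := max 1 n with hM
  have hM1 : (1:ℝ) ≤ M := le_max_left _ _
  have hM0 : (0:ℝ) < M := lt_of_lt_of_le one_pos hM1
  have hMy : (ENNReal.ofReal M)⁻¹ ≤ y₀ := by
    rw [← inv_inv y₀]
    apply ENNReal.inv_le_inv.mpr
    calc y₀⁻¹ = ENNReal.ofReal (y₀⁻¹).toReal :=
          (ENNReal.ofReal_toReal (ENNReal.inv_ne_top.mpr hy₀0)).symm
      _ ≤ ENNReal.ofReal M := ENNReal.ofReal_le_ofReal (hn.trans ((le_max_right _ _)))
  intro h hmeas hnorm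
  set A : Set ℝ := {x | M < |h x|} with hA
  have hAm : MeasurableSet A := (hmeas.measurable.abs) measurableSet_Ioi
  -- pointwise bound
  have hpt : ∀ x, ‖h x - max (-M) (min M (h x))‖ ≤ ‖A.indicator h x‖ := by
    intro x
    by_cases hx : x ∈ A
    · have hx' : M < |h x| := hx
      rw [Set.indicator_of_mem hx]
      rcases lt_or_ge M (h x) with h1 | h1
      · rw [min_eq_left h1.le, max_eq_right (by linarith), Real.norm_eq_abs, Real.norm_eq_abs]
        rw [abs_of_nonneg (by linarith), abs_of_nonneg (by linarith)]
        linarith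
      · have h2 : h x < -M := by
          rcases abs_cases (h x) with ⟨he, _⟩ | ⟨he, _⟩
          · rw [he] at hx'; linarith
          · rw [he] at hx'; linarith
        rw [min_eq_right (by linarith), max_eq_left (by linarith), Real.norm_eq_abs, Real.norm_eq_abs]
        rw [abs_of_nonpos (by linarith), abs_of_nonpos (by linarith)]
        linarith
    · rw [Set.indicator_of_notMem hx]
      have hx' : |h x| ≤ M := not_lt.mp hx
      have h1 : -M ≤ h x := neg_le_of_abs_le hx'
      have h2 : h x ≤ M := le_of_abs_le hx'
      rw [min_eq_right h2, max_eq_right h1]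
      simp
  calc eLpNorm (fun x => h x - max (-M) (min M (h x))) 2 mu01
      ≤ eLpNorm (A.indicator h) 2 mu01 := eLpNorm_mono_ae (Filter.Eventually.of_forall hpt)
    _ = eLpNorm h 2 (mu01.restrict A) := eLpNorm_indicator_eq_eLpNorm_restrict hAm
    _ ≤ eLpNorm h (ENNReal.ofReal (2+δ)) (mu01.restrict A) * (mu01.restrict A) Set.univ ^ (1/(2:ℝ≥0∞).toReal - 1/(ENNReal.ofReal (2+δ)).toReal) := by
        apply eLpNorm_le_eLpNorm_mul_rpow_measure_univ _ hmeas.aestronglyMeasurable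
        calc (2:ℝ≥0∞) = ENNReal.ofReal 2 := by simp
          _ ≤ ENNReal.ofReal (2+δ) := ENNReal.ofReal_le_ofReal (by linarith)
    _ = eLpNorm h (ENNReal.ofReal (2+δ)) (mu01.restrict A) * (mu01 A) ^ θ := by
        rw [Measure.restrict_apply_univ]
        congr 2
        rw [hθ, ENNReal.toReal_ofReal (by linarith)]
        norm_num
    _ ≤ C' * (mu01 A) ^ θ := by
        apply mul_le_mul_left
        exact le_trans (eLpNorm_mono_measure h Measure.restrict_le_self) hnorm
    _ ≤ ENNReal.ofReal ε := by
        -- Chebyshev bound on mu01 A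
        have hcheb : mu01 A ≤ (ENNReal.ofReal M)⁻¹ ^ (2+δ) * C' ^ (2+δ) := by
          have hsub : A ⊆ {x | ENNReal.ofReal M ≤ (‖h x‖₊ : ℝ≥0∞)} := by
            intro x hx
            simp only [Set.mem_setOf_eq] at hx ⊢
            rw [← enorm_eq_nnnorm, ← ofReal_norm]
            exact ENNReal.ofReal_le_ofReal (by rw [Real.norm_eq_abs]; exact hx.le)
          refine (measure_mono hsub).trans ?_
          have := meas_ge_le_mul_pow_eLpNorm_enorm mu01 (p := ENNReal.ofReal (2+δ))
            (by simp; linarith) (by simp) hmeas.aestronglyMeasurable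
            (ε := ENNReal.ofReal M) (by simp [hM0]) (by simp)
          refine this.trans ?_
          rw [ENNReal.toReal_ofReal (by linarith)]
          exact mul_le_mul_right (ENNReal.rpow_le_rpow hnorm (by linarith)) _
        have hche2 : mu01 A ≤ x₀ := by
          refine hcheb.trans ?_
          have h1 : (ENNReal.ofReal M)⁻¹ ^ (2+δ) ≤ y₀ ^ (2+δ) :=
            ENNReal.rpow_le_rpow hMy (by linarith)
          have h2 : y₀ ^ (2+δ) = x₀ / C' ^ (2+δ) := by
            rw [hy₀, ← ENNReal.rpow_mul]
            rw [one_div, inv_mul_cancel₀ (by linarith : (2+δ:ℝ) ≠ 0), ENNReal.rpow_one]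
          calc (ENNReal.ofReal M)⁻¹ ^ (2+δ) * C' ^ (2+δ) ≤ y₀ ^ (2+δ) * C' ^ (2+δ) :=
                mul_le_mul_left h1 _
            _ = x₀ / C' ^ (2+δ) * C' ^ (2+δ) := by rw [h2]
            _ = x₀ := ENNReal.div_mul_cancel hCpow0 hCpowtop
        calc C' * mu01 A ^ θ ≤ C' * x₀ ^ θ :=
              mul_le_mul_right (ENNReal.rpow_le_rpow hche2 hθpos.le) _
          _ = C' * b := by
              rw [hx₀, ← ENNReal.rpow_mul, one_div, inv_mul_cancel₀ hθpos.ne', ENNReal.rpow_one]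
          _ = ENNReal.ofReal ε := ENNReal.mul_div_cancel hC'0 hC'top

theorem floor_lt_N {N : ℕ} (hN : 1 ≤ N) {x : ℝ} (hx : x ∈ Set.Ioo (0:ℝ) 1) :
    ⌊x * N⌋₊ < N := by
  have hN0 : (0:ℝ) < N := by exact_mod_cast hN
  have : x * N < N := by nlinarith [hx.1, hx.2]
  have h0 : (0:ℝ) ≤ x * N := by nlinarith [hx.1]
  exact (Nat.floor_lt h0).mpr this

theorem mem_Ico_floor {N : ℕ} (hN : 1 ≤ N) {x : ℝ} (hx : x ∈ Set.Ioo (0:ℝ) 1) :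
    x ∈ Set.Ico ((⌊x * N⌋₊ : ℝ)/N) ((⌊x * N⌋₊ + 1 : ℝ)/N) := by
  have hN0 : (0:ℝ) < N := by exact_mod_cast hN
  have h0 : (0:ℝ) ≤ x * N := by nlinarith [hx.1]
  constructor
  · rw [div_le_iff₀ hN0]
    exact Nat.floor_le h0
  · rw [lt_div_iff₀ hN0]
    exact Nat.lt_floor_add_one (x * N)

theorem sum_indicator_eval (N : ℕ) (hN : 1 ≤ N) (F : ℕ → ℝ) {x : ℝ} (hx : x ∈ Set.Ioo (0:ℝ) 1) :
    ∑ i : Fin N, (Set.Ico ((i:ℝ)/N) (((i:ℕ)+1:ℝ)/N)).indicator (fun _ => F (i:ℕ)) x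
      = F ⌊x * N⌋₊ := by
  have hN0 : (0:ℝ) < N := by exact_mod_cast hN
  have hlt := floor_lt_N hN hx
  have hmem := mem_Ico_floor hN hx
  rw [Finset.sum_eq_single (⟨⌊x * N⌋₊, hlt⟩ : Fin N)]
  · rw [Set.indicator_of_mem]
    exact hmem
  · intro j _ hj
    apply Set.indicator_of_notMem
    intro hxj
    apply hj
    have h1 : ((j:ℕ):ℝ) ≤ x * N := by
      have := hxj.1; rwa [div_le_iff₀ hN0] at this
    have h2 : x * N < (j:ℕ) + 1 := by
      have := hxj.2; rwa [lt_div_iff₀ hN0] at this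
    have : ⌊x * N⌋₊ = (j:ℕ) := by
      rw [Nat.floor_eq_iff (by nlinarith [hx.1] : (0:ℝ) ≤ x * N)]
      exact ⟨by exact_mod_cast h1, by exact_mod_cast h2⟩
    exact Fin.ext (by simpa using this.symm)
  · intro hmem'
    exact absurd (Finset.mem_univ _) hmem'

theorem sandwich (M : ℝ) (N : ℕ) (hN : 1 ≤ N) (fM : ℝ → ℝ)
    (hmono : MonotoneOn fM (Set.Ioo (0:ℝ) 1)) (hbd : ∀ x, -M ≤ fM x ∧ fM x ≤ M)
    (e : ℕ → ℝ) (he0 : e 0 = -M) (heN : ∀ k, N ≤ k → k ≠ 0 → e k = M)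
    (heMid : ∀ k, k ≠ 0 → k < N → e k = fM ((k:ℝ)/N)) :
    ∀ x ∈ Set.Ioo (0:ℝ) 1, e ⌊x * N⌋₊ ≤ fM x ∧ fM x ≤ e (⌊x * N⌋₊ + 1) := by
  intro x hx
  have hN0 : (0:ℝ) < N := by exact_mod_cast hN
  set i := ⌊x * N⌋₊ with hi
  have hlt : i < N := floor_lt_N hN hx
  have hmem := mem_Ico_floor hN hx
  constructor
  · rcases Nat.eq_zero_or_pos i with h0 | hpos
    · rw [h0, he0]; exact (hbd x).1
    · rw [heMid i (Nat.pos_iff_ne_zero.mp hpos) hlt]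
      have hiI : ((i:ℝ)/N) ∈ Set.Ioo (0:ℝ) 1 := by
        constructor
        · apply div_pos _ hN0; exact_mod_cast hpos
        · rw [div_lt_one hN0]; exact_mod_cast hlt
      exact hmono hiI hx hmem.1
  · by_cases hN2 : N ≤ i + 1
    · rw [heN _ hN2 (Nat.succ_ne_zero i)]; exact (hbd x).2
    · push_neg at hN2
      rw [heMid (i+1) (Nat.succ_ne_zero i) hN2]
      have hI : (((i+1:ℕ)):ℝ)/N ∈ Set.Ioo (0:ℝ) 1 := by
        constructor
        · apply div_pos _ hN0; positivity
        · rw [div_lt_one hN0]; exact_mod_cast hN2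
      apply hmono hx hI
      have := hmem.2.le
      push_cast
      push_cast at this
      linarith

theorem e_bounds (M : ℝ) (hM : 0 ≤ M) (N : ℕ) (fM : ℝ → ℝ)
    (hbd : ∀ x, -M ≤ fM x ∧ fM x ≤ M)
    (e : ℕ → ℝ) (he0 : e 0 = -M) (heN : ∀ k, N ≤ k → k ≠ 0 → e k = M)
    (heMid : ∀ k, k ≠ 0 → k < N → e k = fM ((k:ℝ)/N)) (k : ℕ) :
    -M ≤ e k ∧ e k ≤ M := by
  rcases Nat.eq_zero_or_pos k with h0 | hpos
  · rw [h0, he0]; exact ⟨le_refl _, by linarith⟩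
  · by_cases hk : N ≤ k
    · rw [heN k hk (Nat.pos_iff_ne_zero.mp hpos)]; exact ⟨by linarith, le_refl _⟩
    · rw [heMid k (Nat.pos_iff_ne_zero.mp hpos) (not_le.mp hk)]; exact hbd _

theorem e_step (M : ℝ) (hM : 0 ≤ M) (N : ℕ) (hN : 1 ≤ N) (fM : ℝ → ℝ)
    (hmono : MonotoneOn fM (Set.Ioo (0:ℝ) 1)) (hbd : ∀ x, -M ≤ fM x ∧ fM x ≤ M)
    (e : ℕ → ℝ) (he0 : e 0 = -M) (heN : ∀ k, N ≤ k → k ≠ 0 → e k = M)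
    (heMid : ∀ k, k ≠ 0 → k < N → e k = fM ((k:ℝ)/N)) :
    ∀ k < N, e k ≤ e (k+1) := by
  intro k hk
  have hN0 : (0:ℝ) < N := by exact_mod_cast hN
  rcases Nat.eq_zero_or_pos k with h0 | hpos
  · rw [h0, he0]
    exact (e_bounds M hM N fM hbd e he0 heN heMid 1).1
  · rw [heMid k (Nat.pos_iff_ne_zero.mp hpos) hk]
    by_cases h2 : N ≤ k + 1
    · rw [heN _ h2 (Nat.succ_ne_zero k)]; exact (hbd _).2
    · push_neg at h2
      rw [heMid (k+1) (Nat.succ_ne_zero k) h2]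
      have hkI : ((k:ℝ))/N ∈ Set.Ioo (0:ℝ) 1 := by
        constructor
        · apply div_pos _ hN0; exact_mod_cast hpos
        · rw [div_lt_one hN0]; exact_mod_cast hk
      have hk1I : (((k+1:ℕ):ℝ))/N ∈ Set.Ioo (0:ℝ) 1 := by
        constructor
        · apply div_pos _ hN0; positivity
        · rw [div_lt_one hN0]; exact_mod_cast h2
      apply hmono hkI hk1I
      push_cast
      gcongr
      linarith

theorem coeFn_sum_lp {ι : Type*} (s : Finset ι) (f : ι → Lp ℝ 2 mu01) :
    ⇑(∑ i ∈ s, f i) =ᵐ[mu01] fun x => ∑ i ∈ s, f i x := by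
  classical
  induction s using Finset.induction_on with
  | empty => simp only [Finset.sum_empty]; exact Lp.coeFn_zero _ _ _
  | insert _ _ hne ih =>
    rw [Finset.sum_insert hne]
    refine (Lp.coeFn_add _ _).trans ?_
    filter_upwards [ih] with x hx
    rw [Pi.add_apply, hx, Finset.sum_insert hne]

theorem K_totallyBounded (C δ : ℝ) (hC : 0 < C) (hδ : 0 < δ) :
    TotallyBounded {g : Lp ℝ 2 mu01 |
      (∃ f : ℝ → ℝ, MonotoneOn f (Set.Ioo (0:ℝ) 1) ∧ (g : ℝ → ℝ) =ᵐ[mu01] f) ∧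
      eLpNorm (g : ℝ → ℝ) (ENNReal.ofReal (2 + δ)) mu01 ≤ ENNReal.ofReal C} := by
  rw [Metric.totallyBounded_iff]
  intro ε hε
  obtain ⟨M, hM1, htr⟩ := trunc_small C δ hC hδ (ε/4) (by linarith)
  have hM0 : (0:ℝ) < M := by linarith
  obtain ⟨N, hNgt⟩ := exists_nat_gt ((8*M/ε)^2)
  have hsqpos : (0:ℝ) < (8*M/ε)^2 := by positivity
  have hN1 : 1 ≤ N := by
    rcases Nat.eq_zero_or_pos N with h0 | h; · subst h0; simp at hNgt; linarith
    · exact h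
  have hN0 : (0:ℝ) < N := by exact_mod_cast hN1
  have hβ : (0:ℝ) < ε/(8*M) := by positivity
  have hprod : (8*M/ε)^2 * (ε/(8*M))^2 = 1 := by
    field_simp
  have hNbound : (1:ℝ)/N ≤ (ε/(8*M))^2 := by
    rw [div_le_iff₀ hN0]
    nlinarith [hNgt, hβ, sq_nonneg (ε/(8*M))]
  have hgrid : 2*M * ((1:ℝ)/N) ^ ((1:ℝ)/2) ≤ ε/4 := by
    have h1 : ((1:ℝ)/N) ^ ((1:ℝ)/2) ≤ ((ε/(8*M))^2) ^ ((1:ℝ)/2) :=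
      Real.rpow_le_rpow (by positivity) hNbound (by norm_num)
    have h2 : ((ε/(8*M))^2 : ℝ) ^ ((1:ℝ)/2) = ε/(8*M) := by
      rw [← Real.rpow_natCast (ε/(8*M)) 2, ← Real.rpow_mul hβ.le]
      norm_num
    rw [h2] at h1
    calc 2*M * ((1:ℝ)/N) ^ ((1:ℝ)/2) ≤ 2*M * (ε/(8*M)) := by nlinarith
      _ = ε/4 := by field_simp; ring
  set Φ : (Fin N → ℝ) → Lp ℝ 2 mu01 := fun c =>
    ∑ i : Fin N, c i • indicatorConstLp 2 (measurableSet_Ico :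
      MeasurableSet (Set.Ico ((i:ℝ)/N) (((i:ℕ)+1:ℝ)/N))) (measure_ne_top mu01 _) (1:ℝ) with hΦ
  have hΦcont : Continuous Φ := by
    apply continuous_finset_sum
    intro i _
    exact ((continuous_apply (A := fun _ : Fin N => ℝ) i).smul continuous_const)
  have hScomp : IsCompact (Φ '' (Set.univ.pi fun _ : Fin N => Set.Icc (-M) M)) :=
    ((isCompact_univ_pi fun _ => isCompact_Icc).image hΦcont)
  obtain ⟨t, htfin, htcov⟩ := Metric.totallyBounded_iff.mp hScomp.totallyBounded (ε/2) (by linarith)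
  refine ⟨t, htfin, ?_⟩
  intro g hg
  obtain ⟨⟨f, hfmono, hfae⟩, hgnorm⟩ := hg
  set h := (Lp.aestronglyMeasurable g).mk _ with hh
  have hhsm : StronglyMeasurable h := (Lp.aestronglyMeasurable g).stronglyMeasurable_mk
  have hgh : ⇑g =ᵐ[mu01] h := (Lp.aestronglyMeasurable g).ae_eq_mk
  have hfh : f =ᵐ[mu01] h := hfae.symm.trans hgh
  have hhnorm : eLpNorm h (ENNReal.ofReal (2+δ)) mu01 ≤ ENNReal.ofReal C := by
    rw [← eLpNorm_congr_ae hgh]; exact hgnorm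
  have htrunc := htr h hhsm hhnorm
  set fM : ℝ → ℝ := fun x => max (-M) (min M (f x)) with hfM
  have hfMmono : MonotoneOn fM (Set.Ioo (0:ℝ) 1) := fun x hx y hy hxy =>
    max_le_max le_rfl (min_le_min le_rfl (hfmono hx hy hxy))
  have hfMbd : ∀ x, -M ≤ fM x ∧ fM x ≤ M := fun x =>
    ⟨le_max_left _ _, max_le (by linarith) (min_le_left _ _)⟩
  set e : ℕ → ℝ := fun k => if k = 0 then -M else if N ≤ k then M else fM ((k:ℝ)/N) with he
  have he0 : e 0 = -M := by simp [he]
  have heN : ∀ k, N ≤ k → k ≠ 0 → e k = M := by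
    intro k h1 h2; rw [he]; simp [h2, h1]
  have heMid : ∀ k, k ≠ 0 → k < N → e k = fM ((k:ℝ)/N) := by
    intro k h1 h2; rw [he]; simp [h1, not_le.mpr h2]
  set c : Fin N → ℝ := fun i => e ((i:ℕ)+1) with hc
  have hcS : c ∈ Set.univ.pi fun _ : Fin N => Set.Icc (-M) M := fun i _ =>
    ⟨(e_bounds M hM0.le N fM hfMbd e he0 heN heMid ((i:ℕ)+1)).1,
     (e_bounds M hM0.le N fM hfMbd e he0 heN heMid ((i:ℕ)+1)).2⟩
  -- pointwise version of Φ c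
  set Ψ : ℝ → ℝ := fun x =>
    ∑ i : Fin N, (Set.Ico ((i:ℝ)/N) (((i:ℕ)+1:ℝ)/N)).indicator (fun _ => c i) x with hΨ
  have hΦae : ⇑(Φ c) =ᵐ[mu01] Ψ := by
    refine (coeFn_sum_lp _ _).trans ?_
    have hterm : ∀ i : Fin N,
        ⇑(c i • indicatorConstLp 2 (measurableSet_Ico :
          MeasurableSet (Set.Ico ((i:ℝ)/N) (((i:ℕ)+1:ℝ)/N))) (measure_ne_top mu01 _) (1:ℝ))
          =ᵐ[mu01] fun x => (Set.Ico ((i:ℝ)/N) (((i:ℕ)+1:ℝ)/N)).indicator (fun _ => c i) x := by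
      intro i
      filter_upwards [Lp.coeFn_smul (c i) (indicatorConstLp 2 (measurableSet_Ico :
          MeasurableSet (Set.Ico ((i:ℝ)/N) (((i:ℕ)+1:ℝ)/N))) (measure_ne_top mu01 _) (1:ℝ)),
        indicatorConstLp_coeFn (p := 2) (μ := mu01) (hs := (measurableSet_Ico :
          MeasurableSet (Set.Ico ((i:ℝ)/N) (((i:ℕ)+1:ℝ)/N)))) (hμs := measure_ne_top mu01 _)
          (c := (1:ℝ))] with x h1 h2
      rw [h1, Pi.smul_apply, h2, smul_eq_mul]
      by_cases hx : x ∈ Set.Ico ((i:ℝ)/N) (((i:ℕ)+1:ℝ)/N)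
      · rw [Set.indicator_of_mem hx, Set.indicator_of_mem hx]; ring
      · rw [Set.indicator_of_notMem hx, Set.indicator_of_notMem hx]; ring
    have hall : ∀ᵐ x ∂mu01, ∀ i : Fin N,
        (c i • indicatorConstLp 2 (measurableSet_Ico :
          MeasurableSet (Set.Ico ((i:ℝ)/N) (((i:ℕ)+1:ℝ)/N))) (measure_ne_top mu01 _) (1:ℝ)) x
          = (Set.Ico ((i:ℝ)/N) (((i:ℕ)+1:ℝ)/N)).indicator (fun _ => c i) x :=
      (ae_all_iff).mpr hterm
    filter_upwards [hall] with x hx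
    rw [hΨ]
    exact Finset.sum_congr rfl fun i _ => hx i
  -- the D function
  set d : ℕ → ℝ := fun k => e (k+1) - e k with hd
  have hd0 : ∀ k < N, 0 ≤ d k := fun k hk =>
    sub_nonneg.mpr (e_step M hM0.le N hN1 fM hfMmono hfMbd e he0 heN heMid k hk)
  set D : ℝ → ℝ := fun x =>
    ∑ i : Fin N, (Set.Ico ((i:ℝ)/N) (((i:ℕ)+1:ℝ)/N)).indicator (fun _ => d (i:ℕ)) x with hD
  have hmem_ae : ∀ᵐ x ∂mu01, x ∈ Set.Ioo (0:ℝ) 1 := by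
    rw [mu01]; exact ae_restrict_mem measurableSet_Ioo
  have hDb : ∀ᵐ x ∂mu01, ‖fM x - Ψ x‖ ≤ ‖D x‖ := by
    filter_upwards [hmem_ae] with x hx
    have hΨx : Ψ x = e (⌊x * N⌋₊ + 1) := sum_indicator_eval N hN1 (fun k => e (k+1)) hx
    have hDx : D x = d ⌊x * N⌋₊ := sum_indicator_eval N hN1 d hx
    obtain ⟨hs1, hs2⟩ := sandwich M N hN1 fM hfMmono hfMbd e he0 heN heMid x hx
    rw [hΨx, hDx, Real.norm_eq_abs, Real.norm_eq_abs]
    have h1 : fM x - e (⌊x * ↑N⌋₊ + 1) ≤ 0 := by linarith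
    rw [abs_of_nonpos h1]
    refine le_trans ?_ (le_abs_self _)
    have h2 : d ⌊x * ↑N⌋₊ = e (⌊x * ↑N⌋₊ + 1) - e ⌊x * ↑N⌋₊ := by rw [hd]
    rw [h2]
    linarith
  have hDnorm : eLpNorm D 2 mu01 ≤ ENNReal.ofReal (ε/4) := by
    have hDsum : D = ∑ i : Fin N, fun x =>
        (Set.Ico ((i:ℝ)/N) (((i:ℕ)+1:ℝ)/N)).indicator (fun _ => d (i:ℕ)) x := by
      ext x; rw [hD]; simp
    rw [hDsum]
    refine le_trans (eLpNorm_sum_le (fun i _ =>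
      ((stronglyMeasurable_const.indicator measurableSet_Ico).aestronglyMeasurable)) one_le_two) ?_
    have hterm : ∀ i : Fin N,
        eLpNorm ((Set.Ico ((i:ℝ)/N) (((i:ℕ)+1:ℝ)/N)).indicator (fun _ => d (i:ℕ))) 2 mu01
          ≤ ENNReal.ofReal (d (i:ℕ) * ((1:ℝ)/N) ^ ((1:ℝ)/2)) := by
      intro i
      rw [eLpNorm_indicator_const measurableSet_Ico (by norm_num) (by norm_num)]
      have h2 : ((2:ℝ≥0∞)).toReal = 2 := by norm_num
      rw [h2]
      have hmuIco : mu01 (Set.Ico ((i:ℝ)/N) (((i:ℕ)+1:ℝ)/N)) ≤ ENNReal.ofReal ((1:ℝ)/N) := by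
        rw [mu01, Measure.restrict_apply measurableSet_Ico]
        refine le_trans (measure_mono Set.inter_subset_left) ?_
        rw [Real.volume_Ico]
        apply le_of_eq
        congr 1
        field_simp
        ring
      have hdn : (‖d (i:ℕ)‖₊ : ℝ≥0∞) = ENNReal.ofReal (d (i:ℕ)) :=
        Real.enorm_eq_ofReal (hd0 _ i.2)
      calc (‖d (i:ℕ)‖₊ : ℝ≥0∞) * mu01 (Set.Ico ((i:ℝ)/N) (((i:ℕ)+1:ℝ)/N)) ^ (1/(2:ℝ))
          ≤ ENNReal.ofReal (d (i:ℕ)) * ENNReal.ofReal ((1:ℝ)/N) ^ ((1:ℝ)/2) := by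
            rw [hdn]
            exact mul_le_mul_right (ENNReal.rpow_le_rpow hmuIco (by norm_num)) _
        _ = ENNReal.ofReal (d (i:ℕ) * ((1:ℝ)/N) ^ ((1:ℝ)/2)) := by
            rw [ENNReal.ofReal_rpow_of_pos (one_div_pos.mpr hN0), ← ENNReal.ofReal_mul (hd0 _ i.2)]
    refine le_trans (Finset.sum_le_sum fun i _ => hterm i) ?_
    rw [← ENNReal.ofReal_sum_of_nonneg (fun i _ => mul_nonneg (hd0 _ i.2) (Real.rpow_nonneg (by positivity) _))]
    apply ENNReal.ofReal_le_ofReal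
    rw [← Finset.sum_mul]
    have hsum : ∑ i : Fin N, d (i:ℕ) = 2*M := by
      rw [Fin.sum_univ_eq_sum_range (fun k => d k) N]
      have hδk : ∀ k, d k = e (k+1) - e k := fun k => by rw [hd]
      calc ∑ k ∈ Finset.range N, d k
          = ∑ k ∈ Finset.range N, (e (k+1) - e k) :=
            Finset.sum_congr rfl fun k _ => hδk k
        _ = e N - e 0 := Finset.sum_range_sub e N
        _ = M - (-M) := by rw [heN N le_rfl (Nat.pos_iff_ne_zero.mp hN1), he0]
        _ = 2*M := by ring
    rw [hsum]
    exact hgrid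
  -- assemble the eLpNorm estimate
  have hkey : eLpNorm (⇑g - ⇑(Φ c)) 2 mu01 ≤ ENNReal.ofReal (ε/2) := by
    have hsplit : (⇑g - ⇑(Φ c)) =ᵐ[mu01]
        (fun x => (h x - max (-M) (min M (h x))) + (fM x - Ψ x)) := by
      filter_upwards [hfae, hfh, hΦae] with x h1 h2 h3
      simp only [Pi.sub_apply]
      rw [h1, h3, hfM]
      simp only
      rw [← h2]
      ring
    rw [eLpNorm_congr_ae hsplit]
    have hsm1 : AEStronglyMeasurable (fun x => h x - max (-M) (min M (h x))) mu01 := by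
      apply StronglyMeasurable.aestronglyMeasurable
      have hcl : StronglyMeasurable (fun x => max (-M) (min M (h x))) :=
        (measurable_const.max (measurable_const.min hhsm.measurable)).stronglyMeasurable
      exact hhsm.sub hcl
    have hsm2 : AEStronglyMeasurable (fun x => fM x - Ψ x) mu01 := by
      apply AEStronglyMeasurable.sub
      · have hcl : StronglyMeasurable (fun x => max (-M) (min M (h x))) :=
          (measurable_const.max (measurable_const.min hhsm.measurable)).stronglyMeasurable
        refine hcl.aestronglyMeasurable.congr ?_
        filter_upwards [hfh] with x hx
        rw [hfM]
        simp only
        rw [hx]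
      · apply StronglyMeasurable.aestronglyMeasurable
        apply Finset.stronglyMeasurable_fun_sum
        intro i _
        exact stronglyMeasurable_const.indicator measurableSet_Ico
    refine le_trans (eLpNorm_add_le hsm1 hsm2 one_le_two) ?_
    have hfMΨ : eLpNorm (fun x => fM x - Ψ x) 2 mu01 ≤ ENNReal.ofReal (ε/4) :=
      le_trans (eLpNorm_mono_ae hDb) hDnorm
    calc eLpNorm (fun x => h x - max (-M) (min M (h x))) 2 mu01
          + eLpNorm (fun x => fM x - Ψ x) 2 mu01
        ≤ ENNReal.ofReal (ε/4) + ENNReal.ofReal (ε/4) := add_le_add htrunc hfMΨ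
      _ = ENNReal.ofReal (ε/2) := by rw [← ENNReal.ofReal_add (by linarith) (by linarith)]; congr 1; ring
  -- conclude
  have hdist : dist g (Φ c) ≤ ε/2 := by
    rw [Lp.dist_def]
    exact ENNReal.toReal_le_of_le_ofReal (by linarith) hkey
  have hΦmem : Φ c ∈ Φ '' (Set.univ.pi fun _ : Fin N => Set.Icc (-M) M) :=
    Set.mem_image_of_mem Φ hcS
  obtain ⟨y, hyt, hyball⟩ := Set.mem_iUnion₂.mp (htcov hΦmem)
  refine Set.mem_iUnion₂.mpr ⟨y, hyt, ?_⟩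
  rw [Metric.mem_ball]
  calc dist g y ≤ dist g (Φ c) + dist (Φ c) y := dist_triangle _ _ _
    _ < ε/2 + ε/2 := by
        have := Metric.mem_ball.mp hyball
        linarith [hdist, this]
    _ = ε := by ring

/-- for every `C > 0` and `δ > 0`, the set
`K_C = {g ∈ L₂↑ : ‖g‖_{L^{2+δ}} ≤ C}` is compact in `L²(0,1)`. -/
theorem stmt5 (C δ : ℝ) (hC : 0 < C) (hδ : 0 < δ) :
    IsCompact {g : Lp ℝ 2 mu01 |
      (∃ f : ℝ → ℝ, MonotoneOn f (Set.Ioo (0:ℝ) 1) ∧ (g : ℝ → ℝ) =ᵐ[mu01] f) ∧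
      eLpNorm (g : ℝ → ℝ) (ENNReal.ofReal (2 + δ)) mu01 ≤ ENNReal.ofReal C} :=
  TotallyBounded.isCompact_of_isClosed (K_totallyBounded C δ hC hδ) (K_closed C δ hC hδ)
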